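/- For the inverse Hasse–Schmidt operators 𝔇_h on ⋀M_n, for all h ≥ 1, m ≥ 0 and i₁,…,i_h ≥ 1: 𝔇_{h−1}^m(ε^{i₁} ∧ ⋯ ∧ ε^{i_h}) = Σ_{μ∈p_h(m)} (m!/(μ₁!⋯μ_h!)) · ε^{i₁+Σ_{j≠1}μ_j} ∧ ⋯ ∧ ε^{i_h+Σ_{j≠h}μ_j}. -/

import Mathlib

open ExteriorAlgebra
section A2
variable {M : Type*} [AddCommGroup M] [Module ℤ M]
variable (ε : ℕ → M) (Dbar : ℕ → Module.End ℤ (ExteriorAlgebra ℤ M))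

private lemma aux_D_one' (hB0 : Dbar 0 = 1)
    (hBLeib : ∀ (h : ℕ) (p q : ExteriorAlgebra ℤ M),
      Dbar h (p * q) = ∑ x ∈ Finset.HasAntidiagonal.antidiagonal h, Dbar x.1 p * Dbar x.2 q) :
    ∀ c : ℕ, 1 ≤ c → Dbar c 1 = 0 := by
  intro c
  induction c using Nat.strong_induction_on with
  | _ c IH =>
    intro hc
    obtain ⟨d, rfl⟩ : ∃ d, c = d + 1 := ⟨c - 1, (Nat.succ_pred_eq_of_pos hc).symm⟩
    have h := hBLeib (d + 1) 1 1
    rw [one_mul, Finset.Nat.sum_antidiagonal_eq_sum_range_succ_mk] at h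
    rw [Finset.sum_range_succ, Finset.sum_range_succ'] at h
    have hmid : ∀ k ∈ Finset.range d,
        Dbar (k + 1) (1 : ExteriorAlgebra ℤ M) * Dbar (d + 1 - (k + 1)) 1 = 0 := by
      intro k hk
      rw [Finset.mem_range] at hk
      rw [IH (k + 1) (by omega) (by omega), zero_mul]
    rw [Finset.sum_eq_zero hmid] at h
    simp only [hB0, Module.End.one_apply, Nat.sub_zero, Nat.sub_self, zero_add,
      one_mul, mul_one] at h
    exact right_eq_add.mp h

private lemma aux_leib2' (hB0 : Dbar 0 = 1)
    (hBLeib : ∀ (h : ℕ) (p q : ExteriorAlgebra ℤ M),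
      Dbar h (p * q) = ∑ x ∈ Finset.HasAntidiagonal.antidiagonal h, Dbar x.1 p * Dbar x.2 q)
    (hB1 : ∀ i : ℕ, 1 ≤ i → Dbar 1 (ι ℤ (ε i)) = ι ℤ (ε (i + 1)))
    (hBhi : ∀ j i : ℕ, 2 ≤ j → 1 ≤ i → Dbar j (ι ℤ (ε i)) = 0)
    (i : ℕ) (hi : 1 ≤ i) (q : ExteriorAlgebra ℤ M) (d : ℕ) :
    Dbar (d + 1) (ι ℤ (ε i) * q)
      = ι ℤ (ε i) * Dbar (d + 1) q + ι ℤ (ε (i + 1)) * Dbar d q := by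
  rw [hBLeib, Finset.Nat.sum_antidiagonal_eq_sum_range_succ_mk,
    Finset.sum_range_succ', Finset.sum_range_succ']
  have hmid : ∀ k ∈ Finset.range d,
      Dbar (k + 1 + 1) (ι ℤ (ε i)) * Dbar (d + 1 - (k + 1 + 1)) q = 0 := by
    intro k hk
    rw [hBhi (k + 1 + 1) i (by omega) hi, zero_mul]
  rw [Finset.sum_eq_zero hmid, hB1 i hi]
  simp only [hB0, Module.End.one_apply, zero_add, Nat.sub_zero, Nat.add_sub_cancel]
  abel

variable (hB0 : Dbar 0 = 1)
    (hBLeib : ∀ (h : ℕ) (p q : ExteriorAlgebra ℤ M),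
      Dbar h (p * q) = ∑ x ∈ Finset.HasAntidiagonal.antidiagonal h, Dbar x.1 p * Dbar x.2 q)
    (hB1 : ∀ i : ℕ, 1 ≤ i → Dbar 1 (ι ℤ (ε i)) = ι ℤ (ε (i + 1)))
    (hBhi : ∀ j i : ℕ, 2 ≤ j → 1 ≤ i → Dbar j (ι ℤ (ε i)) = 0)

include hB0 hBLeib hB1 hBhi

private lemma prod_ofFn_succ {h : ℕ} (f : Fin (h + 1) → ExteriorAlgebra ℤ M) :
    (List.ofFn f).prod = f 0 * (List.ofFn fun j => f j.succ).prod := by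
  rw [List.ofFn_succ, List.prod_cons]

private lemma aux_vanish :
    ∀ (h : ℕ) (a : Fin h → ℕ), (∀ j, 1 ≤ a j) → ∀ c, h < c →
      Dbar c ((List.ofFn fun j => ι ℤ (ε (a j))).prod) = 0 := by
  intro h
  induction h with
  | zero =>
    intro a _ c hc
    simpa using aux_D_one' Dbar hB0 hBLeib c hc
  | succ h IH =>
    intro a ha c hc
    obtain ⟨d, rfl⟩ : ∃ d, c = d + 1 := ⟨c - 1, by omega⟩
    rw [List.ofFn_succ, List.prod_cons,
      aux_leib2' ε Dbar hB0 hBLeib hB1 hBhi _ (ha 0) _ d,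
      IH (fun j => a j.succ) (fun j => ha j.succ) (d + 1) (by omega),
      IH (fun j => a j.succ) (fun j => ha j.succ) d (by omega)]
    simp

private lemma aux_top :
    ∀ (h : ℕ) (a : Fin h → ℕ), (∀ j, 1 ≤ a j) →
      Dbar h ((List.ofFn fun j => ι ℤ (ε (a j))).prod)
        = (List.ofFn fun j => ι ℤ (ε (a j + 1))).prod := by
  intro h
  induction h with
  | zero => intro a _; simp [hB0]
  | succ h IH =>
    intro a ha
    rw [List.ofFn_succ, List.prod_cons,
      aux_leib2' ε Dbar hB0 hBLeib hB1 hBhi _ (ha 0) _ h,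
      aux_vanish ε Dbar hB0 hBLeib hB1 hBhi h (fun j => a j.succ)
        (fun j => ha j.succ) (h + 1) (by omega),
      IH (fun j => a j.succ) (fun j => ha j.succ)]
    simp [List.ofFn_succ, List.prod_cons]

private lemma aux_sub :
    ∀ (h : ℕ) (a : Fin (h + 1) → ℕ), (∀ j, 1 ≤ a j) →
      Dbar h ((List.ofFn fun j => ι ℤ (ε (a j))).prod)
        = ∑ k : Fin (h + 1),
            (List.ofFn fun j => ι ℤ (ε (a j + if j = k then 0 else 1))).prod := by
  intro h
  induction h with
  | zero =>
    intro a _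
    simp [hB0, List.ofFn_succ]
  | succ h IH =>
    intro a ha
    rw [prod_ofFn_succ ε Dbar hB0 hBLeib hB1 hBhi,
      aux_leib2' ε Dbar hB0 hBLeib hB1 hBhi _ (ha 0) _ h,
      aux_top ε Dbar hB0 hBLeib hB1 hBhi (h + 1) (fun j => a j.succ)
        (fun j => ha j.succ),
      IH (fun j => a j.succ) (fun j => ha j.succ)]
    conv_rhs => rw [Fin.sum_univ_succ]
    congr 1
    · conv_rhs => rw [prod_ofFn_succ ε Dbar hB0 hBLeib hB1 hBhi]
      refine congrArg₂ (· * ·) (by norm_num) ?_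
      refine congrArg _ (congrArg _ (funext fun j => ?_))
      simp [Fin.succ_ne_zero]
    · rw [Finset.mul_sum]
      refine Finset.sum_congr rfl fun k _ => ?_
      conv_rhs => rw [prod_ofFn_succ ε Dbar hB0 hBLeib hB1 hBhi]
      refine congrArg₂ (· * ·) (by simp [eq_comm, Fin.succ_ne_zero]) ?_
      refine congrArg _ (congrArg _ (funext fun j => ?_))
      simp [Fin.succ_inj]

end A2

private lemma aux_step {h : ℕ} (ν : Fin h → ℕ) (k : Fin h) (hk : 1 ≤ ν k) :
    (∑ j, ν j) * Nat.multinomial Finset.univ (fun j => ν j - if j = k then 1 else 0)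
      = ν k * Nat.multinomial Finset.univ ν := by
  set μ : Fin h → ℕ := fun j => ν j - if j = k then 1 else 0 with hμ
  have hν : ∀ j, ν j = μ j + if j = k then 1 else 0 := by
    intro j
    by_cases hj : j = k
    · subst hj; simp only [hμ, eq_self_iff_true, if_true]; omega
    · simp only [hμ, if_neg hj]; omega
  have hsum : ∑ j, ν j = (∑ j, μ j) + 1 := by
    calc ∑ j, ν j = ∑ j, (μ j + if j = k then 1 else 0) :=
          Finset.sum_congr rfl fun j _ => hν j
      _ = (∑ j, μ j) + ∑ j, (if j = k then 1 else 0) := Finset.sum_add_distrib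
      _ = (∑ j, μ j) + 1 := by rw [Finset.sum_ite_eq' Finset.univ k fun _ => 1]; simp
  have hprod : ∏ j, Nat.factorial (ν j) = ν k * ∏ j, Nat.factorial (μ j) := by
    rw [← Finset.prod_erase_mul Finset.univ _ (Finset.mem_univ k),
      ← Finset.prod_erase_mul Finset.univ (fun j => Nat.factorial (μ j)) (Finset.mem_univ k)]
    have h1 : ∀ j ∈ Finset.univ.erase k, Nat.factorial (ν j) = Nat.factorial (μ j) := by
      intro j hj
      rw [Finset.mem_erase] at hj
      rw [hν j, if_neg hj.1, add_zero]
    rw [Finset.prod_congr rfl h1]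
    have h2 : Nat.factorial (ν k) = ν k * Nat.factorial (μ k) := by
      have : ν k = μ k + 1 := by rw [hν k, if_pos rfl]
      rw [this, Nat.factorial_succ]
    rw [h2]; ring
  have hP : 0 < ∏ j, Nat.factorial (ν j) := Finset.prod_pos fun j _ => Nat.factorial_pos _
  apply Nat.eq_of_mul_eq_mul_left hP
  calc (∏ j, Nat.factorial (ν j)) * ((∑ j, ν j) * Nat.multinomial Finset.univ μ)
      = (∑ j, ν j) * ((ν k * ∏ j, Nat.factorial (μ j)) * Nat.multinomial Finset.univ μ) := by
        rw [← hprod]; ring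
    _ = ν k * ((∑ j, ν j) * ((∏ j, Nat.factorial (μ j)) * Nat.multinomial Finset.univ μ)) := by ring
    _ = ν k * ((∑ j, ν j) * Nat.factorial (∑ j, μ j)) := by rw [Nat.multinomial_spec]
    _ = ν k * Nat.factorial (∑ j, ν j) := by rw [hsum, Nat.factorial_succ]
    _ = ν k * ((∏ j, Nat.factorial (ν j)) * Nat.multinomial Finset.univ ν) := by
        rw [Nat.multinomial_spec]
    _ = (∏ j, Nat.factorial (ν j)) * (ν k * Nat.multinomial Finset.univ ν) := by ring

private lemma aux_pascal {h : ℕ} (ν : Fin h → ℕ) (hS : 0 < ∑ j, ν j) :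
    ∑ k : Fin h, (if 1 ≤ ν k then
        Nat.multinomial Finset.univ (fun j => ν j - if j = k then 1 else 0) else 0)
      = Nat.multinomial Finset.univ ν := by
  apply Nat.eq_of_mul_eq_mul_left hS
  rw [Finset.mul_sum]
  calc ∑ k : Fin h, (∑ j, ν j) * (if 1 ≤ ν k then
          Nat.multinomial Finset.univ (fun j => ν j - if j = k then 1 else 0) else 0)
      = ∑ k : Fin h, ν k * Nat.multinomial Finset.univ ν := by
        refine Finset.sum_congr rfl fun k _ => ?_
        by_cases hk : 1 ≤ ν k
        · rw [if_pos hk, aux_step ν k hk]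
        · rw [if_neg hk, mul_zero]
          have h0 : ν k = 0 := by omega
          rw [h0, zero_mul]
    _ = (∑ j, ν j) * Nat.multinomial Finset.univ ν := by rw [Finset.sum_mul]

private lemma aux_fiber {h : ℕ} (m : ℕ) (ν : Fin h → ℕ) (hν : ∑ j, ν j = m + 1)
    (k : Fin h) :
    ∑ μ ∈ Finset.Nat.antidiagonalTuple h m,
        (if ν = (fun j => μ j + if j = k then 1 else 0)
          then Nat.multinomial Finset.univ μ else 0)
      = if 1 ≤ ν k then
          Nat.multinomial Finset.univ (fun j => ν j - if j = k then 1 else 0) else 0 := by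
  by_cases hk : 1 ≤ ν k
  · rw [if_pos hk]
    rw [Finset.sum_eq_single (fun j => ν j - if j = k then 1 else 0)]
    · rw [if_pos]
      funext j
      by_cases hj : j = k
      · subst hj; simp only [eq_self_iff_true, if_true]; omega
      · simp only [if_neg hj]; omega
    · intro μ hμ hne
      rw [if_neg]
      intro hcon
      apply hne
      funext j
      have := congrFun hcon j
      by_cases hj : j = k
      · subst hj; simp only [eq_self_iff_true, if_true] at this ⊢; omega
      · simp only [if_neg hj] at this ⊢; omega
    · intro hnotmem
      exfalso
      apply hnotmem
      rw [Finset.Nat.mem_antidiagonalTuple]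
      have : ∀ j, ν j = (ν j - if j = k then 1 else 0) + (if j = k then 1 else 0) := by
        intro j
        by_cases hj : j = k
        · subst hj; simp only [eq_self_iff_true, if_true]; omega
        · simp only [if_neg hj]; omega
      have hs : ∑ j, ν j
          = (∑ j, (ν j - if j = k then 1 else 0)) + ∑ j, (if j = k then 1 else 0) := by
        rw [← Finset.sum_add_distrib]
        exact Finset.sum_congr rfl fun j _ => this j
      rw [Finset.sum_ite_eq' Finset.univ k fun _ => 1, if_pos (Finset.mem_univ k)] at hs
      omega
  · rw [if_neg hk]
    apply Finset.sum_eq_zero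
    intro μ _
    rw [if_neg]
    intro hcon
    have := congrFun hcon k
    simp only [eq_self_iff_true, if_true] at this
    omega

open ExteriorAlgebra in
/-- Proposition 4.2: for the inverse Hasse–Schmidt operators on `⋀M_n`,
`𝔇_{h−1}^m(ε^{i₁} ∧ ⋯ ∧ ε^{i_h}) =
  Σ_{μ∈p_h(m)} (m!/(μ₁!⋯μ_h!)) ε^{i₁+Σ_{j≠1}μ_j} ∧ ⋯ ∧ ε^{i_h+Σ_{j≠h}μ_j}`. -/
theorem inverse_hasseSchmidt_subtop_power (n : ℕ) (M : Type*) [AddCommGroup M]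
    [Module ℤ M] (ε : ℕ → M) (hε : ∀ m : ℕ, n < m → ε m = 0)
    (Dbar : ℕ → Module.End ℤ (ExteriorAlgebra ℤ M))
    (hB0 : Dbar 0 = 1)
    (hBLeib : ∀ (h : ℕ) (p q : ExteriorAlgebra ℤ M),
      Dbar h (p * q) = ∑ x ∈ Finset.HasAntidiagonal.antidiagonal h, Dbar x.1 p * Dbar x.2 q)
    (hB1 : ∀ i : ℕ, 1 ≤ i → Dbar 1 (ι ℤ (ε i)) = ι ℤ (ε (i + 1)))
    (hBhi : ∀ j i : ℕ, 2 ≤ j → 1 ≤ i → Dbar j (ι ℤ (ε i)) = 0) :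
    ∀ (h m : ℕ), 1 ≤ h → ∀ i : Fin h → ℕ, (∀ j, 1 ≤ i j) →
      (Dbar (h - 1) ^ m) ((List.ofFn fun j => ι ℤ (ε (i j))).prod) =
        ∑ μ ∈ Finset.Nat.antidiagonalTuple h m,
          (Nat.multinomial Finset.univ μ) •
            (List.ofFn fun j =>
              ι ℤ (ε (i j + ∑ j' ∈ Finset.univ.erase j, μ j'))).prod := by
  intro h m hh i hi
  obtain ⟨g, rfl⟩ : ∃ g, h = g + 1 := ⟨h - 1, by omega⟩
  simp only [Nat.add_sub_cancel]
  -- notation for the generic summand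
  set T : (Fin (g + 1) → ℕ) → ExteriorAlgebra ℤ M := fun ν =>
    (List.ofFn fun j => ι ℤ (ε (i j + ∑ j' ∈ Finset.univ.erase j, ν j'))).prod with hT
  induction m with
  | zero =>
    rw [pow_zero, Module.End.one_apply, Finset.Nat.antidiagonalTuple_zero_right,
      Finset.sum_singleton]
    have h1 : Nat.multinomial Finset.univ (0 : Fin (g + 1) → ℕ) = 1 := by
      simp [Nat.multinomial]
    rw [h1, one_smul]
    simp [hT]
  | succ m IH =>
    have hstep : (Dbar g ^ (m + 1)) ((List.ofFn fun j => ι ℤ (ε (i j))).prod)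
        = Dbar g ((Dbar g ^ m) ((List.ofFn fun j => ι ℤ (ε (i j))).prod)) := by
      rw [pow_succ', Module.End.mul_apply]
    rw [hstep, IH, map_sum]
    have hDT : ∀ μ : Fin (g + 1) → ℕ,
        Dbar g (T μ) = ∑ k : Fin (g + 1), T (fun j => μ j + if j = k then 1 else 0) := by
      intro μ
      rw [hT]
      rw [aux_sub ε Dbar hB0 hBLeib hB1 hBhi g
        (fun j => i j + ∑ j' ∈ Finset.univ.erase j, μ j')
        (fun j => le_trans (hi j) (Nat.le_add_right _ _))]
      refine Finset.sum_congr rfl fun k _ => ?_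
      refine congrArg _ (congrArg _ (funext fun j => congrArg _ (congrArg _ ?_)))
      rw [Finset.sum_add_distrib, Finset.sum_ite_eq' (Finset.univ.erase j) k fun _ => 1]
      by_cases hjk : j = k
      · subst hjk
        simp
      · have : k ∈ Finset.univ.erase j := by
          rw [Finset.mem_erase]; exact ⟨Ne.symm hjk, Finset.mem_univ k⟩
        rw [if_neg hjk, if_pos this]
        ring
    calc ∑ μ ∈ Finset.Nat.antidiagonalTuple (g + 1) m,
          Dbar g (Nat.multinomial Finset.univ μ • T μ)
        = ∑ μ ∈ Finset.Nat.antidiagonalTuple (g + 1) m, ∑ k : Fin (g + 1),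
            Nat.multinomial Finset.univ μ • T (fun j => μ j + if j = k then 1 else 0) := by
          refine Finset.sum_congr rfl fun μ _ => ?_
          rw [map_nsmul, hDT μ, Finset.smul_sum]
      _ = ∑ μ ∈ Finset.Nat.antidiagonalTuple (g + 1) m, ∑ k : Fin (g + 1),
            ∑ ν ∈ Finset.Nat.antidiagonalTuple (g + 1) (m + 1),
              (if ν = (fun j => μ j + if j = k then 1 else 0)
                then Nat.multinomial Finset.univ μ else 0) • T ν := by
          refine Finset.sum_congr rfl fun μ hμ => Finset.sum_congr rfl fun k _ => ?_
          have hmem : (fun j => μ j + if j = k then 1 else 0)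
              ∈ Finset.Nat.antidiagonalTuple (g + 1) (m + 1) := by
            rw [Finset.Nat.mem_antidiagonalTuple] at hμ ⊢
            rw [Finset.sum_add_distrib, hμ,
              Finset.sum_ite_eq' Finset.univ k fun _ => 1, if_pos (Finset.mem_univ k)]
          have : ∀ ν, (if ν = (fun j => μ j + if j = k then 1 else 0)
                then Nat.multinomial Finset.univ μ else 0) • T ν
              = (if ν = (fun j => μ j + if j = k then 1 else 0)
                then Nat.multinomial Finset.univ μ • T ν else 0) := by
            intro ν
            split <;> simp
          rw [Finset.sum_congr rfl fun ν _ => this ν,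
            Finset.sum_ite_eq' (Finset.Nat.antidiagonalTuple (g + 1) (m + 1))
              (fun j => μ j + if j = k then 1 else 0)
              (fun ν => Nat.multinomial Finset.univ μ • T ν),
            if_pos hmem]
      _ = ∑ ν ∈ Finset.Nat.antidiagonalTuple (g + 1) (m + 1),
            (∑ μ ∈ Finset.Nat.antidiagonalTuple (g + 1) m, ∑ k : Fin (g + 1),
              (if ν = (fun j => μ j + if j = k then 1 else 0)
                then Nat.multinomial Finset.univ μ else 0)) • T ν := by
          rw [Finset.sum_congr rfl fun μ _ => Finset.sum_comm, Finset.sum_comm]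
          refine Finset.sum_congr rfl fun ν _ => ?_
          rw [Finset.sum_smul]
          exact Finset.sum_congr rfl fun μ _ => (Finset.sum_smul).symm
      _ = ∑ ν ∈ Finset.Nat.antidiagonalTuple (g + 1) (m + 1),
            Nat.multinomial Finset.univ ν • T ν := by
          refine Finset.sum_congr rfl fun ν hν => ?_
          rw [Finset.Nat.mem_antidiagonalTuple] at hν
          congr 1
          rw [Finset.sum_comm]
          calc ∑ k : Fin (g + 1), ∑ μ ∈ Finset.Nat.antidiagonalTuple (g + 1) m,
                (if ν = (fun j => μ j + if j = k then 1 else 0)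
                  then Nat.multinomial Finset.univ μ else 0)
              = ∑ k : Fin (g + 1), (if 1 ≤ ν k then
                  Nat.multinomial Finset.univ (fun j => ν j - if j = k then 1 else 0)
                    else 0) :=
                Finset.sum_congr rfl fun k _ => aux_fiber m ν hν k
            _ = Nat.multinomial Finset.univ ν := aux_pascal ν (by omega)
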